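/- The N(N−1)/2-dimensional Euclidean volume of the Gelfand–Tsetlin polytope GT_N(x) equals h(x) / ∏_{k=1}^{N-1} k!, where h(x) = ∏_{1≤i<j≤N}(x_i − x_j), for x in the open Weyl chamber C_N = {x ∈ ℝ^N : x_1 > ··· > x_N}. -/

import Mathlib

noncomputable section
open MeasureTheory

/-- The triangular array with free rows `T` (rows `0, …, N-2`, row `k` of length `k+1`) and top
row `x` (row `N-1`). -/
def arrE (N : ℕ) (T : ∀ k : Fin (N - 1), Fin (k.1 + 1) → ℝ) (x : ℕ → ℝ) : ℕ → ℕ → ℝ :=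
  fun k i => if hk : k < N - 1 then (if hi : i < k + 1 then T ⟨k, hk⟩ ⟨i, hi⟩ else 0) else x i

/-- The Gelfand–Tsetlin polytope `GT_N(x)`: triangular arrays with top row `x` satisfying the
interlacing conditions `x^{k+1}_{i+1} ≤ x^k_i ≤ x^{k+1}_i`, viewed in the `N(N-1)/2` free
coordinates. -/
def GTpolytope (N : ℕ) (x : ℕ → ℝ) : Set (∀ k : Fin (N - 1), Fin (k.1 + 1) → ℝ) :=
  {T | ∀ k < N - 1, ∀ i ≤ k,
    arrE N T x (k + 1) (i + 1) ≤ arrE N T x k i ∧ arrE N T x k i ≤ arrE N T x (k + 1) i}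

open Finset

/-! ### Algebraic preliminaries: Vandermonde products and determinants -/

/-- `∏_{i<j} (y i - y j)`. -/
def Vprod (m : ℕ) (y : Fin m → ℝ) : ℝ := ∏ i : Fin m, ∏ j ∈ Finset.Ioi i, (y i - y j)

lemma signVand (m : ℕ) (y : Fin m → ℝ) :
    Vprod m y = (-1) ^ (∑ i ∈ range m, i) * (Matrix.vandermonde y).det := by
  rw [Matrix.det_vandermonde, Vprod]
  have h1 : ∀ i : Fin m, ∏ j ∈ Finset.Ioi i, (y i - y j)
      = (-1) ^ ((Finset.Ioi i).card) * ∏ j ∈ Finset.Ioi i, (y j - y i) := by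
    intro i
    rw [← Finset.prod_const, ← Finset.prod_mul_distrib]
    exact Finset.prod_congr rfl fun j _ => by ring
  simp_rw [h1]
  rw [Finset.prod_mul_distrib, Finset.prod_pow_eq_pow_sum]
  congr 2
  simp_rw [Fin.card_Ioi]
  rw [Fin.sum_univ_eq_sum_range (fun i => m - 1 - i) m]
  exact Finset.sum_range_reflect (fun j => j) m

section Det
variable (m : ℕ) (x : Fin (m+1) → ℝ)

/-- Matrix of normalized powers evaluated at `x i`. -/
def Cmat : Matrix (Fin (m+1)) (Fin (m+1)) ℝ :=
  fun i j => x i ^ j.1 / (if j.1 = 0 then 1 else (j.1 : ℝ))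

lemma det_Cmat : (Cmat m x).det = (Matrix.vandermonde x).det / (m.factorial : ℝ) := by
  have : Cmat m x = Matrix.vandermonde x * Matrix.diagonal
      (fun j : Fin (m+1) => (if j.1 = 0 then 1 else (j.1 : ℝ))⁻¹) := by
    ext i j
    simp [Cmat, Matrix.mul_diagonal, Matrix.vandermonde, div_eq_mul_inv]
  rw [this, Matrix.det_mul, Matrix.det_diagonal, div_eq_mul_inv]
  congr 1
  rw [Finset.prod_inv_distrib]
  congr 1
  have h2 : ∀ j : Fin (m+1), (if (j.1 = 0) then (1:ℝ) else (j.1:ℝ))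
      = (((if j.1 = 0 then 1 else j.1 : ℕ)) : ℝ) := by
    intro j; split <;> simp
  simp only [h2, ← Nat.cast_prod]
  congr 1
  rw [Fin.prod_univ_eq_prod_range (fun i => if i = 0 then 1 else i) (m+1),
    Finset.prod_range_succ']
  simp [Finset.prod_range_add_one_eq_factorial]


def Bmat (m : ℕ) (x : Fin (m+1) → ℝ) : Matrix (Fin m) (Fin m) ℝ :=
  fun i j => (x i.castSucc ^ (j.1+1) - x i.succ ^ (j.1+1)) / (j.1+1)

def Lmat : Matrix (Fin (m+1)) (Fin (m+1)) ℝ :=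
  fun i j => (if j = i then (1:ℝ) else 0) +
    (if h : i.1 < m then (if j = ⟨i.1+1, by omega⟩ then (-1:ℝ) else 0) else 0)

lemma Lmat_triangular : (Lmat m).BlockTriangular id := by
  intro i j hij
  have hij' : j < i := hij
  simp only [Lmat]
  have h1 : ¬ (j = i) := by rintro rfl; exact absurd hij' (lt_irrefl _)
  rw [if_neg h1, zero_add]
  split
  · rw [if_neg]
    rintro rfl
    rw [Fin.lt_def] at hij'
    simp at hij'
  · rfl

lemma det_Lmat : (Lmat m).det = 1 := by
  rw [Matrix.det_of_upperTriangular (Lmat_triangular m)]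
  have h : ∀ i : Fin (m+1), Lmat m i i = 1 := by
    intro i
    by_cases h : i.1 < m
    · simp [Lmat, dif_pos h, Fin.ext_iff]
    · simp [Lmat, dif_neg h]
  simp [h]

lemma Dmat_apply (i j : Fin (m+1)) :
    (Lmat m * Cmat m x) i j
      = Cmat m x i j + (if h : i.1 < m then -(Cmat m x ⟨i.1+1, by omega⟩ j) else 0) := by
  rw [Matrix.mul_apply]
  by_cases h : i.1 < m
  · simp only [Lmat, dif_pos h, add_mul, ite_mul, one_mul, zero_mul, neg_mul,
      Finset.sum_add_distrib, Finset.sum_ite_eq' Finset.univ,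
      Finset.mem_univ, if_pos, if_true]
  · simp only [Lmat, dif_neg h, add_mul, ite_mul, one_mul, zero_mul, neg_mul,
      add_zero, Finset.sum_add_distrib, Finset.sum_ite_eq' Finset.univ,
      Finset.mem_univ, if_pos, if_true, Finset.sum_const_zero]

lemma hexp : (Lmat m * Cmat m x).det = (-1:ℝ)^m * (Bmat m x).det := by
  rw [Matrix.det_succ_column_zero]
  rw [Finset.sum_eq_single (Fin.last m)]
  · have h0 : (Lmat m * Cmat m x) (Fin.last m) 0 = 1 := by
      rw [Dmat_apply, dif_neg (by simp : ¬ ((Fin.last m).1 < m))]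
      simp [Cmat]
    rw [h0, mul_one, Fin.val_last]
    have hsub : (Lmat m * Cmat m x).submatrix (Fin.last m).succAbove Fin.succ = Bmat m x := by
      ext i j
      simp only [Matrix.submatrix_apply, Fin.succAbove_last]
      rw [Dmat_apply, dif_pos (show ((Fin.castSucc i).1 < m) from i.2)]
      have h3 : (⟨(Fin.castSucc i).1 + 1, Nat.succ_lt_succ i.2⟩ : Fin (m+1)) = i.succ := rfl
      rw [h3]
      simp only [Bmat, Cmat, Fin.val_succ]
      push_cast
      ring
    rw [hsub]
  · intro i _ hne
    have hi : i.1 < m := by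
      have h2 := i.2
      have : i.1 ≠ m := fun h => hne (Fin.ext h)
      omega
    rw [Dmat_apply, dif_pos hi]
    simp [Cmat]
  · simp

lemma det_Bmat : (Bmat m x).det = (-1:ℝ)^m * (Matrix.vandermonde x).det / (m.factorial : ℝ) := by
  have h1 : (Lmat m * Cmat m x).det = (Cmat m x).det := by
    rw [Matrix.det_mul, det_Lmat, one_mul]
  have h2 := hexp m x
  rw [h1, det_Cmat] at h2
  have hsq : (-1:ℝ)^m * (-1)^m = 1 := by
    rw [← pow_add]; exact Even.neg_one_pow ⟨m, rfl⟩
  rw [mul_div_assoc, h2, ← mul_assoc, hsq, one_mul]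

end Det

/-! ### The key integral computation -/

lemma integral_box_det (m : ℕ) (x : Fin (m+1) → ℝ) (hx : ∀ i : Fin m, x i.succ ≤ x i.castSucc) :
    ∫ y in Set.univ.pi (fun i : Fin m => Set.Icc (x i.succ) (x i.castSucc)),
      (Matrix.vandermonde y).det = (Bmat m x).det := by
  set box := Set.univ.pi (fun i : Fin m => Set.Icc (x i.succ) (x i.castSucc)) with hbox
  have hbox_meas : MeasurableSet box := MeasurableSet.univ_pi (fun i => measurableSet_Icc)
  have hboxc : IsCompact box := isCompact_univ_pi (fun i => isCompact_Icc)
  have hint : ∀ σ : Equiv.Perm (Fin m),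
      IntegrableOn (fun y : Fin m → ℝ =>
        ((Equiv.Perm.sign σ : ℤ) : ℝ) * ∏ i : Fin m, y (σ i) ^ (i.1)) box volume := by
    intro σ
    exact ((continuous_const.mul
      (continuous_finset_prod _ fun i _ =>
        (continuous_apply (σ i)).pow _)).continuousOn).integrableOn_compact hboxc
  have hdet : ∀ y : Fin m → ℝ, (Matrix.vandermonde y).det
      = ∑ σ : Equiv.Perm (Fin m), ((Equiv.Perm.sign σ : ℤ) : ℝ) * ∏ i : Fin m, y (σ i) ^ (i.1) := by
    intro y
    rw [Matrix.det_apply']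
    exact Finset.sum_congr rfl fun σ _ => by simp [Matrix.vandermonde_apply]
  calc ∫ y in box, (Matrix.vandermonde y).det
      = ∫ y in box, ∑ σ : Equiv.Perm (Fin m),
          ((Equiv.Perm.sign σ : ℤ) : ℝ) * ∏ i : Fin m, y (σ i) ^ (i.1) := by
        exact integral_congr_ae (Filter.Eventually.of_forall fun y => hdet y)
    _ = ∑ σ : Equiv.Perm (Fin m), ∫ y in box,
          ((Equiv.Perm.sign σ : ℤ) : ℝ) * ∏ i : Fin m, y (σ i) ^ (i.1) :=
        integral_finset_sum _ (fun σ _ => hint σ)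
    _ = ∑ σ : Equiv.Perm (Fin m), ((Equiv.Perm.sign σ : ℤ) : ℝ) *
          ∏ j : Fin m, Bmat m x j (σ.symm j) := by
        refine Finset.sum_congr rfl fun σ _ => ?_
        rw [MeasureTheory.integral_const_mul]
        congr 1
        have hre : ∀ y : Fin m → ℝ, ∏ i : Fin m, y (σ i) ^ (i.1)
            = ∏ j : Fin m, y j ^ ((σ.symm j).1) := by
          intro y
          rw [← Equiv.prod_comp σ (fun j => y j ^ ((σ.symm j).1))]
          simp
        simp_rw [hre]
        rw [← MeasureTheory.integral_indicator hbox_meas]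
        have hind : box.indicator (fun y : Fin m → ℝ => ∏ j : Fin m, y j ^ ((σ.symm j).1))
            = fun y : Fin m → ℝ => ∏ j : Fin m,
                (Set.Icc (x j.succ) (x j.castSucc)).indicator
                  (fun t => t ^ ((σ.symm j).1)) (y j) := by
          funext y
          by_cases hy : y ∈ box
          · rw [Set.indicator_of_mem hy]
            exact Finset.prod_congr rfl fun j _ =>
              (Set.indicator_of_mem (hy j (Set.mem_univ j)) _).symm
          · rw [Set.indicator_of_notMem hy]
            rw [Set.mem_univ_pi] at hy
            push_neg at hy
            obtain ⟨j, hj⟩ := hy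
            symm
            exact Finset.prod_eq_zero (Finset.mem_univ j) (Set.indicator_of_notMem hj _)
        rw [hind]
        beta_reduce
        rw [MeasureTheory.volume_pi, MeasureTheory.integral_fintype_prod_eq_prod (ι := Fin m)
          (fun j t => (Set.Icc (x j.succ) (x j.castSucc)).indicator
            (fun t => t ^ ((σ.symm j).1)) t)]
        refine Finset.prod_congr rfl fun j _ => ?_
        rw [integral_indicator measurableSet_Icc, integral_Icc_eq_integral_Ioc,
          ← intervalIntegral.integral_of_le (hx j), integral_pow]
        simp [Bmat]
    _ = (Bmat m x).det := by
        rw [← Matrix.det_transpose (Bmat m x), Matrix.det_apply']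
        rw [← Equiv.sum_comp (Equiv.inv (Equiv.Perm (Fin m)))
          (fun σ => ((Equiv.Perm.sign σ : ℤ) : ℝ)
            * ∏ i : Fin m, (Bmat m x).transpose (σ i) i)]
        refine Finset.sum_congr rfl fun σ _ => ?_
        simp only [Equiv.inv_apply, Equiv.Perm.sign_inv, Matrix.transpose_apply]
        rfl

lemma integral_box_Vprod (m : ℕ) (x : Fin (m+1) → ℝ)
    (hx : ∀ i : Fin m, x i.succ ≤ x i.castSucc) :
    ∫ y in Set.univ.pi (fun i : Fin m => Set.Icc (x i.succ) (x i.castSucc)),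
      Vprod m y = Vprod (m+1) x / (m.factorial : ℝ) := by
  simp_rw [signVand m]
  rw [MeasureTheory.integral_const_mul, integral_box_det m x hx, det_Bmat,
    signVand (m+1) x, Finset.sum_range_succ, pow_add]
  ring

/-! ### The measure-preserving splitting of the top free row -/

def rowSplitE (m : ℕ) :
    (∀ k : Fin (m+1), Fin (k.1+1) → ℝ) ≃ ((Fin (m+1) → ℝ) × ∀ k : Fin m, Fin (k.1+1) → ℝ) where
  toFun T := (T (Fin.last m), fun k => T k.castSucc)
  invFun p := fun k i =>
    if h : k.1 < m then p.2 ⟨k.1, h⟩ ⟨i.1, i.2⟩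
    else p.1 ⟨i.1, by omega⟩
  left_inv T := by
    funext k i
    dsimp only
    by_cases h : k.1 < m
    · rw [dif_pos h]; rfl
    · rw [dif_neg h]
      have hk : k = Fin.last m := Fin.ext (by rw [Fin.val_last]; have := k.2; omega)
      subst hk
      rfl
  right_inv p := by
    ext k i
    · dsimp only
      rw [dif_neg (show ¬ ((Fin.last m).1 < m) by simp)]
    · dsimp only
      rw [dif_pos (show ((Fin.castSucc k).1 < m) from k.2)]; rfl

lemma measurable_rowSplitE (m : ℕ) : Measurable (rowSplitE m) := by
  refine Measurable.prod ?_ ?_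
  · exact measurable_pi_apply _
  · exact measurable_pi_lambda _ fun k => measurable_pi_apply _

lemma measurable_rowSplitE_symm (m : ℕ) : Measurable (rowSplitE m).symm := by
  refine measurable_pi_lambda _ fun k => measurable_pi_lambda _ fun i => ?_
  by_cases h : k.1 < m
  · simp only [rowSplitE, Equiv.coe_fn_symm_mk, dif_pos h]
    exact (measurable_pi_apply _).comp ((measurable_pi_apply _).comp measurable_snd)
  · simp only [rowSplitE, Equiv.coe_fn_symm_mk, dif_neg h]
    exact (measurable_pi_apply _).comp measurable_fst

/-- The row-split as a measurable equivalence. -/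
def rowSplit (m : ℕ) :
    (∀ k : Fin (m+1), Fin (k.1+1) → ℝ) ≃ᵐ ((Fin (m+1) → ℝ) × ∀ k : Fin m, Fin (k.1+1) → ℝ) where
  toEquiv := rowSplitE m
  measurable_toFun := measurable_rowSplitE m
  measurable_invFun := measurable_rowSplitE_symm m

lemma rowSplit_symm_preimage_pi (m : ℕ) (s : ∀ k : Fin (m+1), Set (Fin (k.1+1) → ℝ)) :
    (rowSplit m).symm ⁻¹' (Set.univ.pi s)
      = (s (Fin.last m)) ×ˢ (Set.univ.pi fun k : Fin m => s k.castSucc) := by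
  ext ⟨y, S⟩
  simp only [Set.mem_preimage, Set.mem_pi, Set.mem_univ, forall_true_left, Set.mem_prod]
  constructor
  · intro h
    refine ⟨?_, fun k => ?_⟩
    · have := h (Fin.last m)
      convert this using 2
      funext i
      show y i = (rowSplit m).symm (y, S) (Fin.last m) i
      show y i = (rowSplitE m).symm (y, S) (Fin.last m) i
      simp only [rowSplitE, Equiv.coe_fn_symm_mk]
      rw [dif_neg (show ¬ ((Fin.last m).1 < m) by simp)]
    · have := h k.castSucc
      convert this using 2
      funext i
      show S k i = (rowSplitE m).symm (y, S) k.castSucc i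
      simp only [rowSplitE, Equiv.coe_fn_symm_mk]
      rw [dif_pos (show ((Fin.castSucc k).1 < m) from k.2)]
      rfl
  · rintro ⟨h1, h2⟩ k
    induction k using Fin.lastCases with
    | last =>
        have he : (rowSplit m).symm (y, S) (Fin.last m) = y := by
          funext i
          show (rowSplitE m).symm (y, S) (Fin.last m) i = y i
          simp only [rowSplitE, Equiv.coe_fn_symm_mk]
          rw [dif_neg (show ¬ ((Fin.last m).1 < m) by simp)]
          rfl
        rw [he]; exact h1
    | cast k =>
        have he : (rowSplit m).symm (y, S) k.castSucc = S k := by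
          funext i
          show (rowSplitE m).symm (y, S) k.castSucc i = S k i
          simp only [rowSplitE, Equiv.coe_fn_symm_mk]
          rw [dif_pos (show ((Fin.castSucc k).1 < m) from k.2)]
          rfl
        rw [he]; exact h2 k

lemma measurePreserving_rowSplit_symm (m : ℕ) :
    MeasurePreserving (rowSplit m).symm
      (volume : Measure ((Fin (m+1) → ℝ) × ∀ k : Fin m, Fin (k.1+1) → ℝ))
      (volume : Measure (∀ k : Fin (m+1), Fin (k.1+1) → ℝ)) := by
  refine ⟨(rowSplit m).symm.measurable, ?_⟩
  rw [show (volume : Measure (∀ k : Fin (m+1), Fin (k.1+1) → ℝ))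
      = Measure.pi (fun k : Fin (m+1) => (volume : Measure (Fin (k.1+1) → ℝ))) from rfl]
  refine (Measure.pi_eq fun s hs => ?_).symm
  rw [MeasurableEquiv.map_apply, rowSplit_symm_preimage_pi]
  rw [Measure.volume_eq_prod, Measure.prod_prod]
  rw [show (volume : Measure (∀ k : Fin m, Fin (k.1+1) → ℝ))
      = Measure.pi (fun k : Fin m => (volume : Measure (Fin (k.1+1) → ℝ))) from rfl,
    Measure.pi_pi]
  rw [Fin.prod_univ_castSucc (f := fun k : Fin (m+1) => volume (s k))]
  exact mul_comm _ _

/-! ### Measurability of the polytope, slices -/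

lemma measurable_arrE (N : ℕ) (x : ℕ → ℝ) (k i : ℕ) :
    Measurable (fun T : ∀ k : Fin (N - 1), Fin (k.1 + 1) → ℝ => arrE N T x k i) := by
  unfold arrE
  split_ifs with hk hi
  · exact (measurable_pi_apply _).comp (measurable_pi_apply _)
  · exact measurable_const
  · exact measurable_const

lemma measurableSet_GT (N : ℕ) (x : ℕ → ℝ) : MeasurableSet (GTpolytope N x) := by
  have h : GTpolytope N x = ⋂ (k : ℕ) (i : ℕ),
      {T : ∀ k : Fin (N - 1), Fin (k.1 + 1) → ℝ | k < N - 1 → i ≤ k →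
        (arrE N T x (k + 1) (i + 1) ≤ arrE N T x k i ∧ arrE N T x k i ≤ arrE N T x (k + 1) i)} := by
    ext T
    simp only [GTpolytope, Set.mem_setOf_eq, Set.mem_iInter]
    exact ⟨fun h k i hk hi => h k hk i hi, fun h k hk i hi => h k i hk hi⟩
  rw [h]
  refine MeasurableSet.iInter fun k => MeasurableSet.iInter fun i => ?_
  by_cases hk : k < N - 1
  · by_cases hi : i ≤ k
    · have : {T : ∀ k : Fin (N - 1), Fin (k.1 + 1) → ℝ | k < N - 1 → i ≤ k →
          (arrE N T x (k + 1) (i + 1) ≤ arrE N T x k i ∧ arrE N T x k i ≤ arrE N T x (k + 1) i)}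
          = {T | arrE N T x (k + 1) (i + 1) ≤ arrE N T x k i}
            ∩ {T | arrE N T x k i ≤ arrE N T x (k + 1) i} := by
        ext T; simp [hk, hi]
      rw [this]
      exact (measurableSet_le (measurable_arrE N x _ _) (measurable_arrE N x _ _)).inter
        (measurableSet_le (measurable_arrE N x _ _) (measurable_arrE N x _ _))
    · have : {T : ∀ k : Fin (N - 1), Fin (k.1 + 1) → ℝ | k < N - 1 → i ≤ k →
          (arrE N T x (k + 1) (i + 1) ≤ arrE N T x k i ∧ arrE N T x k i ≤ arrE N T x (k + 1) i)}
          = Set.univ := by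
        ext T; simp [hi]
      rw [this]; exact MeasurableSet.univ
  · have : {T : ∀ k : Fin (N - 1), Fin (k.1 + 1) → ℝ | k < N - 1 → i ≤ k →
        (arrE N T x (k + 1) (i + 1) ≤ arrE N T x k i ∧ arrE N T x k i ≤ arrE N T x (k + 1) i)}
        = Set.univ := by
      ext T; simp [hk]
    rw [this]; exact MeasurableSet.univ

def yext (m : ℕ) (y : Fin (m+1) → ℝ) : ℕ → ℝ :=
  fun j => if h : j < m+1 then y ⟨j, h⟩ else 0

lemma Vprod_eq_prod_range (N : ℕ) (x : ℕ → ℝ) :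
    (∏ i ∈ Finset.range N, ∏ j ∈ Finset.Ioo i N, (x i - x j))
      = ∏ i : Fin N, ∏ j ∈ Finset.Ioi i, (x i.1 - x j.1) := by
  rw [← Fin.prod_univ_eq_prod_range (fun i => ∏ j ∈ Finset.Ioo i N, (x i - x j)) N]
  refine Finset.prod_congr rfl fun i _ => ?_
  refine Finset.prod_bij (fun a ha => (⟨a, (Finset.mem_Ioo.mp ha).2⟩ : Fin N)) ?_ ?_ ?_ ?_
  · intro a ha
    exact Finset.mem_Ioi.mpr ((Finset.mem_Ioo.mp ha).1 : i.1 < a)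
  · intro a ha b hb hab
    exact congrArg Fin.val hab
  · intro b hb
    exact ⟨b.1, Finset.mem_Ioo.mpr ⟨Fin.lt_def.mp (Finset.mem_Ioi.mp hb), b.2⟩, rfl⟩
  · intro a ha; rfl

lemma arr_comp (m : ℕ) (x : ℕ → ℝ) (y : Fin (m+1) → ℝ) (S : ∀ k : Fin m, Fin (k.1+1) → ℝ)
    (k i : ℕ) (hk : k ≤ m) :
    arrE (m+2) ((rowSplitE m).symm (y, S)) x k i = arrE (m+1) S (yext m y) k i := by
  have hk2 : k < (m+2) - 1 := by omega
  rw [arrE, arrE]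
  rw [dif_pos hk2]
  by_cases hkm : k < m
  · rw [dif_pos (show k < (m+1) - 1 from hkm)]
    by_cases hi : i < k + 1
    · rw [dif_pos hi, dif_pos hi]
      show (rowSplitE m).symm (y, S) ⟨k, hk2⟩ ⟨i, hi⟩ = S ⟨k, hkm⟩ ⟨i, hi⟩
      simp only [rowSplitE, Equiv.coe_fn_symm_mk]
      rw [dif_pos (show (⟨k, hk2⟩ : Fin (m+1)).1 < m from hkm)]
    · rw [dif_neg hi, dif_neg hi]
  · rw [dif_neg (show ¬ (k < (m+1) - 1) from hkm)]
    have hkm' : k = m := by omega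
    by_cases hi : i < k + 1
    · rw [dif_pos hi]
      show (rowSplitE m).symm (y, S) ⟨k, hk2⟩ ⟨i, hi⟩ = yext m y i
      simp only [rowSplitE, Equiv.coe_fn_symm_mk, yext]
      rw [dif_neg (show ¬ ((⟨k, hk2⟩ : Fin (m+1)).1 < m) from hkm)]
      rw [dif_pos (show i < m+1 by omega)]
    · rw [dif_neg hi, yext]
      rw [dif_neg (show ¬ (i < m+1) by omega)]

lemma arr_top (m : ℕ) (x : ℕ → ℝ) (T : ∀ k : Fin (m+1), Fin (k.1+1) → ℝ) (i : ℕ) :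
    arrE (m+2) T x (m+1) i = x i := by
  rw [arrE, dif_neg (show ¬ (m+1 < (m+2)-1) by omega)]

lemma slice_mem (m : ℕ) (x : ℕ → ℝ) (y : Fin (m+1) → ℝ) (S : ∀ k : Fin m, Fin (k.1+1) → ℝ) :
    (rowSplitE m).symm (y, S) ∈ GTpolytope (m+2) x ↔
      ((∀ i : Fin (m+1), x (i.1+1) ≤ y i ∧ y i ≤ x i.1) ∧ S ∈ GTpolytope (m+1) (yext m y)) := by
  have hyext : ∀ i : Fin (m+1), yext m y i.1 = y i := by
    intro i
    rw [yext, dif_pos i.2]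
  constructor
  · intro h
    refine ⟨fun i => ?_, fun k hk i hi => ?_⟩
    · have h2 := h m (by omega) i.1 (by have := i.2; omega)
      rw [arr_top, arr_top, arr_comp m x y S m i.1 le_rfl] at h2
      rw [arrE, dif_neg (show ¬ (m < (m+1)-1) by omega), hyext i] at h2
      exact h2
    · have hk' : k < m := hk
      have h2 := h k (by omega) i hi
      rw [arr_comp m x y S k i (by omega), arr_comp m x y S (k+1) (i+1) (by omega),
        arr_comp m x y S (k+1) i (by omega)] at h2
      exact h2
  · rintro ⟨h1, h2⟩ k hk i hi
    by_cases hkm : k < m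
    · have h3 := h2 k hkm i hi
      rw [arr_comp m x y S k i (by omega), arr_comp m x y S (k+1) (i+1) (by omega),
        arr_comp m x y S (k+1) i (by omega)]
      exact h3
    · have hkm' : k = m := by omega
      rw [hkm']
      have hi' : i < m + 1 := by omega
      have h3 := h1 ⟨i, hi'⟩
      rw [arr_top, arr_top, arr_comp m x y S m i le_rfl,
        arrE, dif_neg (show ¬ (m < (m+1)-1) by omega)]
      have : yext m y i = y ⟨i, hi'⟩ := by rw [yext, dif_pos hi']
      rw [this]
      exact h3

/-! ### Null boundary -/

lemma null_frontier (m : ℕ) (a b : Fin (m+1) → ℝ) :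
    volume ((Set.univ.pi fun i : Fin (m+1) => Set.Icc (a i) (b i))
      \ (Set.univ.pi fun i : Fin (m+1) => Set.Ioo (a i) (b i))) = 0 := by
  have hsub : (Set.univ.pi fun i : Fin (m+1) => Set.Icc (a i) (b i))
      \ (Set.univ.pi fun i : Fin (m+1) => Set.Ioo (a i) (b i))
      ⊆ ⋃ i : Fin (m+1), ({f : Fin (m+1) → ℝ | f i = a i} ∪ {f | f i = b i}) := by
    rintro f ⟨hf1, hf2⟩
    rw [Set.mem_univ_pi] at hf2
    push_neg at hf2
    obtain ⟨i, hi⟩ := hf2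
    have hIcc := hf1 i (Set.mem_univ i)
    rw [Set.mem_iUnion]
    refine ⟨i, ?_⟩
    rw [Set.mem_Icc] at hIcc
    rw [Set.mem_Ioo] at hi
    push_neg at hi
    rcases lt_or_eq_of_le hIcc.1 with h | h
    · exact Or.inr (le_antisymm hIcc.2 (hi h))
    · exact Or.inl h.symm
  refine measure_mono_null hsub (measure_iUnion_null fun i => measure_union_null ?_ ?_)
  · exact Measure.pi_hyperplane (fun _ : Fin (m+1) => (volume : Measure ℝ)) i (a i)
  · exact Measure.pi_hyperplane (fun _ : Fin (m+1) => (volume : Measure ℝ)) i (b i)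

lemma continuous_Vprod (m : ℕ) : Continuous (Vprod m) :=
  continuous_finset_prod _ fun i _ =>
    continuous_finset_prod _ fun j _ => (continuous_apply i).sub (continuous_apply j)

/-- The Euclidean volume of the Gelfand–Tsetlin polytope `GT_N(x)` is
`∏_{i<j}(x_i - x_j) / ∏_{k=1}^{N-1} k!` for `x` in the open Weyl chamber. -/
theorem GTpolytope_volume (N : ℕ) (hN : 1 ≤ N) (x : ℕ → ℝ)
    (hx : ∀ i j, i < j → j < N → x j < x i) :
    volume (GTpolytope N x)
      = ENNReal.ofReal ((∏ i ∈ Finset.range N, ∏ j ∈ Finset.Ioo i N, (x i - x j))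
          / ∏ k ∈ Finset.range N, (k.factorial : ℝ)) := by
  induction N, hN using Nat.le_induction generalizing x with
  | base =>
      have h1 : GTpolytope 1 x = Set.univ := by
        ext T
        simp [GTpolytope]
      rw [h1]
      have h2 : (volume : Measure (∀ k : Fin (1-1), Fin (k.1+1) → ℝ)) Set.univ = 1 := by
        rw [show (volume : Measure (∀ k : Fin (1-1), Fin (k.1+1) → ℝ))
            = Measure.pi (fun k : Fin (1-1) => (volume : Measure (Fin (k.1+1) → ℝ))) from rfl,
          Measure.pi_univ]
        simp
      rw [h2]
      rw [Finset.prod_range_one, Finset.prod_range_one,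
        show (Finset.Ioo 0 1 : Finset ℕ) = ∅ from rfl]
      simp
  | succ n hn IH =>
      obtain ⟨m, rfl⟩ : ∃ m, n = m + 1 := ⟨n - 1, by omega⟩
      set D : ℝ := ∏ k ∈ Finset.range (m+1), (k.factorial : ℝ) with hD
      have hD0 : 0 < D := Finset.prod_pos fun k _ => by positivity
      set xfin : Fin (m+2) → ℝ := fun i => x i.1 with hxfin
      set Icb : Set (Fin (m+1) → ℝ) :=
        Set.univ.pi fun i : Fin (m+1) => Set.Icc (xfin i.succ) (xfin i.castSucc) with hIcb
      set Iob : Set (Fin (m+1) → ℝ) :=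
        Set.univ.pi fun i : Fin (m+1) => Set.Ioo (xfin i.succ) (xfin i.castSucc) with hIob
      have hxdec : ∀ i : Fin (m+1), xfin i.succ ≤ xfin i.castSucc := by
        intro i
        exact le_of_lt (hx i.1 (i.1+1) (Nat.lt_succ_self _) (by have := i.2; omega))
      have hGTmeas : MeasurableSet (GTpolytope (m+2) x) := measurableSet_GT _ _
      have hA : MeasurableSet ((rowSplit m).symm ⁻¹' (GTpolytope (m+2) x)) :=
        (rowSplit m).symm.measurable hGTmeas
      have h1 : volume (GTpolytope (m+2) x)
          = volume ((rowSplit m).symm ⁻¹' (GTpolytope (m+2) x)) :=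
        ((measurePreserving_rowSplit_symm m).measure_preimage
          hGTmeas.nullMeasurableSet).symm
      have h2 : volume ((rowSplit m).symm ⁻¹' (GTpolytope (m+2) x))
          = ∫⁻ y, volume (Prod.mk y ⁻¹' ((rowSplit m).symm ⁻¹' (GTpolytope (m+2) x))) := by
        rw [Measure.volume_eq_prod, Measure.prod_apply hA]
      have hslice : ∀ y : Fin (m+1) → ℝ,
          Prod.mk y ⁻¹' ((rowSplit m).symm ⁻¹' (GTpolytope (m+2) x))
            = {S : ∀ k : Fin m, Fin (k.1+1) → ℝ | (rowSplitE m).symm (y, S) ∈ GTpolytope (m+2) x} :=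
        fun y => rfl
      -- value of the slice volume on the open box
      have hopen : ∀ y ∈ Iob,
          volume {S : ∀ k : Fin m, Fin (k.1+1) → ℝ |
              (rowSplitE m).symm (y, S) ∈ GTpolytope (m+2) x}
            = ENNReal.ofReal (Vprod (m+1) y / D) := by
        intro y hy
        have hlt : ∀ i : Fin (m+1), xfin i.succ < y i ∧ y i < xfin i.castSucc := by
          intro i
          have := hy i (Set.mem_univ i)
          rw [Set.mem_Ioo] at this
          exact this
        have hyd : ∀ i j, i < j → j < m+1 → yext m y j < yext m y i := by
          intro i j hij hj
          have hi : i < m+1 := lt_trans hij hj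
          rw [yext, dif_pos hj]
          rw [show yext m y i = y ⟨i, hi⟩ from by rw [yext, dif_pos hi]]
          have h1' : y ⟨j, hj⟩ < x j := (hlt ⟨j, hj⟩).2
          have h3' : x (i+1) < y ⟨i, hi⟩ := (hlt ⟨i, hi⟩).1
          have h2' : x j ≤ x (i+1) := by
            rcases eq_or_lt_of_le (show i+1 ≤ j from hij) with h | h
            · exact le_of_eq (congrArg x h.symm)
            · exact le_of_lt (hx (i+1) j h (by omega))
          linarith
        have hset : {S : ∀ k : Fin m, Fin (k.1+1) → ℝ |
            (rowSplitE m).symm (y, S) ∈ GTpolytope (m+2) x}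
            = GTpolytope (m+1) (yext m y) := by
          ext S
          rw [Set.mem_setOf_eq, slice_mem]
          constructor
          · rintro ⟨-, h⟩; exact h
          · intro h
            refine ⟨fun i => ⟨le_of_lt (hlt i).1, le_of_lt (hlt i).2⟩, h⟩
        rw [hset]
        refine (IH (yext m y) hyd).trans ?_
        congr 1
        rw [Vprod_eq_prod_range]
        congr 1
        refine Finset.prod_congr rfl fun i _ => Finset.prod_congr rfl fun j _ => ?_
        rw [show yext m y i.1 = y i from by rw [yext, dif_pos i.2],
          show yext m y j.1 = y j from by rw [yext, dif_pos j.2]]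
      have hclosed : ∀ y : Fin (m+1) → ℝ, y ∉ Icb →
          volume {S : ∀ k : Fin m, Fin (k.1+1) → ℝ |
              (rowSplitE m).symm (y, S) ∈ GTpolytope (m+2) x} = 0 := by
        intro y hy
        have : {S : ∀ k : Fin m, Fin (k.1+1) → ℝ |
            (rowSplitE m).symm (y, S) ∈ GTpolytope (m+2) x} = ∅ := by
          ext S
          rw [Set.mem_setOf_eq, slice_mem]
          simp only [Set.mem_empty_iff_false, iff_false]
          rintro ⟨h1', -⟩
          refine hy ?_
          rw [hIcb, Set.mem_univ_pi]
          intro i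
          rw [Set.mem_Icc]
          exact (h1' i)
        rw [this]
        exact measure_empty
      have hnull : volume (Icb \ Iob) = 0 := null_frontier m _ _
      have hae : (fun y : Fin (m+1) → ℝ => volume {S : ∀ k : Fin m, Fin (k.1+1) → ℝ |
            (rowSplitE m).symm (y, S) ∈ GTpolytope (m+2) x})
          =ᵐ[volume] Iob.indicator (fun y => ENNReal.ofReal (Vprod (m+1) y / D)) := by
        have h3 : ∀ᵐ y : Fin (m+1) → ℝ, y ∉ Icb \ Iob := by
          rw [MeasureTheory.ae_iff]
          simp only [not_not]; exact hnull
        filter_upwards [h3] with y hy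
        by_cases hyo : y ∈ Iob
        · rw [Set.indicator_of_mem hyo, hopen y hyo]
        · rw [Set.indicator_of_notMem hyo]
          exact hclosed y (fun hc => hy ⟨hc, hyo⟩)
      have hIob_meas : MeasurableSet Iob :=
        MeasurableSet.univ_pi fun i => measurableSet_Ioo
      have hIcb_meas : MeasurableSet Icb :=
        MeasurableSet.univ_pi fun i => measurableSet_Icc
      have hIobIcb : Iob ⊆ Icb := by
        intro y hy i hi
        have := hy i hi
        rw [Set.mem_Ioo] at this
        exact Set.mem_Icc.mpr ⟨le_of_lt this.1, le_of_lt this.2⟩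
      have hIset : Iob =ᵐ[volume] Icb := by
        rw [MeasureTheory.ae_eq_set]
        refine ⟨?_, hnull⟩
        rw [Set.diff_eq_empty.mpr hIobIcb]
        exact measure_empty
      have hweak : ∀ y ∈ Icb, 0 ≤ Vprod (m+1) y := by
        intro y hy
        refine Finset.prod_nonneg fun i _ => Finset.prod_nonneg fun j hj => ?_
        have hij : i < j := Finset.mem_Ioi.mp hj
        have hIcc : ∀ k : Fin (m+1), xfin k.succ ≤ y k ∧ y k ≤ xfin k.castSucc := by
          intro k
          have := hy k (Set.mem_univ k)
          rw [Set.mem_Icc] at this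
          exact this
        have h1' : y j ≤ x j.1 := (hIcc j).2
        have h3' : x (i.1+1) ≤ y i := (hIcc i).1
        have h2' : x j.1 ≤ x (i.1+1) := by
          rcases eq_or_lt_of_le (show i.1+1 ≤ j.1 from Fin.lt_def.mp hij) with h | h
          · exact le_of_eq (congrArg x h.symm)
          · exact le_of_lt (hx (i.1+1) j.1 h (by have := j.2; omega))
        have : y j ≤ y i := by linarith
        linarith
      have hIcbc : IsCompact Icb := isCompact_univ_pi fun i => isCompact_Icc
      have hintg : IntegrableOn (fun y : Fin (m+1) → ℝ => Vprod (m+1) y / D) Icb volume :=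
        (((continuous_Vprod (m+1)).div_const D).continuousOn).integrableOn_compact hIcbc
      calc volume (GTpolytope (m+2) x)
          = ∫⁻ y, Iob.indicator (fun y => ENNReal.ofReal (Vprod (m+1) y / D)) y := by
            rw [h1, h2]
            exact lintegral_congr_ae hae
        _ = ∫⁻ y in Iob, ENNReal.ofReal (Vprod (m+1) y / D) := by
            rw [lintegral_indicator hIob_meas]
        _ = ∫⁻ y in Icb, ENNReal.ofReal (Vprod (m+1) y / D) := by
            rw [Measure.restrict_congr_set hIset]
        _ = ENNReal.ofReal (∫ y in Icb, Vprod (m+1) y / D) := by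
            refine (MeasureTheory.ofReal_integral_eq_lintegral_ofReal hintg ?_).symm
            rw [Filter.EventuallyLE, ae_restrict_iff' hIcb_meas]
            refine Filter.Eventually.of_forall fun y hy => ?_
            have := hweak y hy
            positivity
        _ = ENNReal.ofReal ((∫ y in Icb, Vprod (m+1) y) / D) := by
            rw [integral_div]
        _ = ENNReal.ofReal ((Vprod (m+2) xfin / ((m+1).factorial : ℝ)) / D) := by
            rw [integral_box_Vprod (m+1) xfin hxdec]
        _ = ENNReal.ofReal ((∏ i ∈ Finset.range (m+2), ∏ j ∈ Finset.Ioo i (m+2), (x i - x j))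
              / ∏ k ∈ Finset.range (m+2), (k.factorial : ℝ)) := by
            congr 1
            rw [Vprod_eq_prod_range (m+2) x, Finset.prod_range_succ, div_div, mul_comm _ D]
            rfl
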